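/- Let ζ(w) = ∑_{m=1}^∞ a_m w^m ∈ ℂ[[w]] be a formal power series with zero constant term such that det(ζ(w)·I − B(w^n)) = 0 in ℂ[[w]], where B(w^n) denotes the series obtained from B(z) by substituting z = w^n. Then b_1 = a_1^n, where b_1 = (B_1)_{n,1}. -/

import Mathlib

open PowerSeries Matrix

/-- If `ζ(w) = ∑_{m≥1} a_m wᵐ` is a power-series eigenvalue branch of the normal form
`B`, i.e. `det(ζ(w)·I - B(wⁿ)) = 0` in `ℂ[[w]]`, then `b₁ = a₁ⁿ`,
where `b₁ = (B₁)_{n,1}`. -/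
theorem first_puiseux_coefficient (n : ℕ) (hn : 2 ≤ n)
    (Bc : ℕ → Matrix (Fin n) (Fin n) ℂ)
    (hB0 : ∀ i j : Fin n, Bc 0 i j = if (i : ℕ) + 1 = (j : ℕ) then 1 else 0)
    (hBrow : ∀ ℓ : ℕ, 1 ≤ ℓ → ∀ i j : Fin n, (i : ℕ) + 1 < n → Bc ℓ i j = 0)
    (a : ℕ → ℂ) (ha0 : a 0 = 0)
    (hroot : Matrix.det
      (PowerSeries.mk a • (1 : Matrix (Fin n) (Fin n) (PowerSeries ℂ)) -
        Matrix.of fun i j : Fin n => PowerSeries.mk fun m =>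
          if n ∣ m then Bc (m / n) i j else 0) = 0) :
    Bc 1 ⟨n - 1, by omega⟩ ⟨0, by omega⟩ = (a 1) ^ n := by
  obtain ⟨m, rfl⟩ : ∃ m, n = m + 1 := ⟨n - 1, by omega⟩
  have hm : 1 ≤ m := by omega
  set ζ : PowerSeries ℂ := PowerSeries.mk a with hζdef
  set N : Matrix (Fin (m+1)) (Fin (m+1)) (PowerSeries ℂ) :=
    Matrix.of (fun i j : Fin (m+1) => PowerSeries.mk fun k =>
      if (m+1) ∣ k then Bc (k / (m+1)) i j else 0) with hNdef
  set M : Matrix (Fin (m+1)) (Fin (m+1)) (PowerSeries ℂ) := ζ • 1 - N with hMdef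
  have hdetM : M.det = 0 := hroot
  -- entries of `N` on rows other than the last one
  have hNrow : ∀ i j : Fin (m+1), (i:ℕ) + 1 < m + 1 →
      N i j = PowerSeries.C (if (i:ℕ) + 1 = (j:ℕ) then 1 else 0) := by
    intro i j hi
    ext k
    rw [hNdef]
    simp only [Matrix.of_apply, coeff_mk, PowerSeries.coeff_C]
    rcases Nat.eq_zero_or_pos k with rfl | hk
    · simp [hB0 i j]
    · have hk0 : k ≠ 0 := by omega
      simp only [hk0, if_false]
      split_ifs with hdvd
      · have hle : m + 1 ≤ k := Nat.le_of_dvd hk hdvd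
        have h1 : 1 ≤ k / (m+1) := (Nat.one_le_div_iff (by omega)).2 hle
        exact hBrow _ h1 i j hi
      · rfl
  -- low coefficients of the last row of `N` vanish
  have hNlast_small : ∀ (j : Fin (m+1)) (k : ℕ), k ≤ m →
      (coeff k) (N (Fin.last m) j) = 0 := by
    intro j k hk
    rw [hNdef]
    simp only [Matrix.of_apply, coeff_mk]
    split_ifs with hdvd
    · have hk0 : k = 0 := Nat.eq_zero_of_dvd_of_lt hdvd (by omega)
      subst hk0
      simp only [Nat.zero_div, hB0]
      have hj := j.isLt
      have hne : ¬ (m + 1 = (j:ℕ)) := by omega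
      simp [Fin.val_last, hne]
    · rfl
  have hNlast_top : ∀ j : Fin (m+1),
      (coeff (m+1)) (N (Fin.last m) j) = Bc 1 (Fin.last m) j := by
    intro j
    rw [hNdef]
    simp only [Matrix.of_apply, coeff_mk, dvd_refl, if_true, Nat.div_self (by omega : 0 < m+1)]
  -- factor `ζ = X * ψ`
  set ψ : PowerSeries ℂ := PowerSeries.mk (fun k => a (k+1)) with hψdef
  have hζψ : ζ = X * ψ := by
    ext k
    cases k with
    | zero => simp [hζdef, ha0]
    | succ k => simp [hζdef, hψdef, coeff_succ_X_mul]
  -- the auxiliary matrix V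
  set V : Matrix (Fin (m+1)) (Fin (m+1)) (PowerSeries ℂ) :=
    Matrix.of (fun i j : Fin (m+1) =>
      if j = 0 then ζ ^ (i:ℕ) else if i = j then 1 else 0) with hVdef
  set g : PowerSeries ℂ :=
    ζ ^ (m+1) - ∑ k : Fin (m+1), N (Fin.last m) k * ζ ^ (k:ℕ) with hgdef
  -- columns ≥ 1 of M * V are those of M
  have hMVcol : ∀ i j : Fin (m+1), j ≠ 0 → (M * V) i j = M i j := by
    intro i j hj
    rw [Matrix.mul_apply]
    rw [Finset.sum_eq_single j]
    · simp [hVdef, hj]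
    · intro k _ hkj
      simp [hVdef, hj, hkj]
    · simp
  -- first column of M * V
  have hMV0 : ∀ i : Fin (m+1), (M * V) i 0 = if i = Fin.last m then g else 0 := by
    intro i
    have hMsum : (M * V) i 0 =
        ζ ^ ((i:ℕ)+1) - ∑ k : Fin (m+1), N i k * ζ ^ (k:ℕ) := by
      rw [Matrix.mul_apply]
      have : ∀ k : Fin (m+1), M i k * V k 0 =
          (ζ * (if i = k then 1 else 0)) * ζ ^ (k:ℕ) - N i k * ζ ^ (k:ℕ) := by
        intro k
        rw [hMdef, hVdef]
        simp only [Matrix.sub_apply, Matrix.smul_apply, Matrix.one_apply, Matrix.of_apply,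
          if_pos rfl, if_true, smul_eq_mul]
        ring
      rw [Finset.sum_congr rfl (fun k _ => this k), Finset.sum_sub_distrib]
      congr 1
      rw [Finset.sum_eq_single i]
      · simp [pow_succ, mul_comm]
      · intro k _ hki
        simp [Ne.symm hki]
      · simp
    by_cases hi : i = Fin.last m
    · subst hi
      rw [hMsum, if_pos rfl, hgdef]
      simp [Fin.val_last]
    · rw [hMsum, if_neg hi]
      have hilt : (i:ℕ) + 1 < m + 1 := by
        have := Fin.val_lt_last hi
        omega
      have : ∑ k : Fin (m+1), N i k * ζ ^ (k:ℕ) = ζ ^ ((i:ℕ)+1) := by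
        rw [Finset.sum_eq_single (⟨(i:ℕ)+1, hilt⟩ : Fin (m+1))]
        · rw [hNrow i _ hilt]
          simp
        · intro k _ hk
          rw [hNrow i _ hilt]
          have : ¬ ((i:ℕ) + 1 = (k:ℕ)) := by
            intro h
            exact hk (Fin.ext h.symm)
          simp [this]
        · simp
      rw [this, sub_self]
  -- the minor is lower triangular with diagonal -1
  have hminor : ((M * V).submatrix (Fin.last m).succAbove Fin.succ).det = (-1) ^ m := by
    have hentry : ∀ i j : Fin m, (M * V).submatrix (Fin.last m).succAbove Fin.succ i j =
        ζ * (if (i:ℕ) = (j:ℕ) + 1 then 1 else 0) -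
          PowerSeries.C (if (i:ℕ) = (j:ℕ) then 1 else 0) := by
      intro i j
      have h1 : (Fin.last m).succAbove i = i.castSucc := by
        simp [Fin.succAbove_last]
      rw [Matrix.submatrix_apply, h1, hMVcol _ _ (Fin.succ_ne_zero j)]
      have hcast : ((i.castSucc : Fin (m+1)) : ℕ) + 1 < m + 1 := by
        simp only [Fin.coe_castSucc]
        omega
      rw [hMdef]
      simp only [Matrix.sub_apply, Matrix.smul_apply, Matrix.one_apply, smul_eq_mul]
      rw [hNrow _ _ hcast]
      congr 2
      · congr 1
        simp only [eq_iff_iff]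
        constructor
        · intro h
          have := congrArg Fin.val h
          simpa using this
        · intro h
          apply Fin.ext
          simpa using h
      · congr 1
        simp only [Fin.coe_castSucc, Fin.val_succ, eq_iff_iff]
        omega
    have htri : ((M * V).submatrix (Fin.last m).succAbove Fin.succ).BlockTriangular
        OrderDual.toDual := by
      intro i j hij
      have hij' : (i:ℕ) < (j:ℕ) := hij
      rw [hentry i j]
      have h1 : ¬ ((i:ℕ) = (j:ℕ) + 1) := by omega
      have h2 : ¬ ((i:ℕ) = (j:ℕ)) := by omega
      simp [h1, h2]
    rw [Matrix.det_of_lowerTriangular _ htri]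
    have : ∀ i : Fin m, (M * V).submatrix (Fin.last m).succAbove Fin.succ i i = -1 := by
      intro i
      rw [hentry i i]
      have h1 : ¬ ((i:ℕ) = (i:ℕ) + 1) := by omega
      simp [h1]
    rw [Finset.prod_congr rfl (fun i _ => this i)]
    simp
  -- g = 0
  have hg0 : g = 0 := by
    have h0 : (M * V).det = 0 := by
      rw [Matrix.det_mul, hdetM, zero_mul]
    rw [Matrix.det_succ_column_zero] at h0
    rw [Finset.sum_eq_single (Fin.last m)] at h0
    · rw [hMV0, if_pos rfl, hminor, Fin.val_last] at h0
      have : ((-1 : PowerSeries ℂ) ^ m * (-1) ^ m) * g = 0 := by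
        rw [← h0]; ring
      simpa [← mul_pow] using this
    · intro i _ hi
      rw [hMV0, if_neg hi, mul_zero, zero_mul]
    · simp
  -- extract the coefficient of w^(m+1)
  have hco := congrArg (coeff (m+1)) hg0
  rw [hgdef, map_sub, map_sum, map_zero] at hco
  have hζpow : (coeff (m+1)) (ζ ^ (m+1)) = (a 1) ^ (m+1) := by
    rw [hζψ, mul_pow]
    have := PowerSeries.coeff_X_pow_mul (ψ ^ (m+1)) (m+1) 0
    rw [zero_add] at this
    rw [this, PowerSeries.coeff_zero_eq_constantCoeff, map_pow]
    simp [hψdef]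
  have hterm : ∀ k : Fin (m+1),
      (coeff (m+1)) (N (Fin.last m) k * ζ ^ (k:ℕ)) =
        Bc 1 (Fin.last m) k * (0:ℂ) ^ (k:ℕ) := by
    intro k
    rw [PowerSeries.coeff_mul]
    rw [Finset.sum_eq_single ((m+1 : ℕ), (0 : ℕ))]
    · rw [hNlast_top, PowerSeries.coeff_zero_eq_constantCoeff, map_pow]
      simp [hζdef, ha0]
    · rintro ⟨p, q⟩ hmem hne
      rw [Finset.HasAntidiagonal.mem_antidiagonal] at hmem
      have hple : p ≤ m := by
        rcases Nat.lt_or_ge p (m+1) with h | h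
        · omega
        · exfalso; apply hne
          have : p = m + 1 := by omega
          subst this
          have : q = 0 := by omega
          subst this
          rfl
      rw [hNlast_small _ _ hple, zero_mul]
    · intro h
      exfalso
      exact h (Finset.HasAntidiagonal.mem_antidiagonal.2 (by simp))
  rw [Finset.sum_congr rfl (fun k _ => hterm k)] at hco
  rw [hζpow] at hco
  have hsum : ∑ k : Fin (m+1), Bc 1 (Fin.last m) k * (0:ℂ) ^ (k:ℕ) =
      Bc 1 (Fin.last m) 0 := by
    rw [Finset.sum_eq_single (0 : Fin (m+1))]
    · simp
    · intro k _ hk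
      have : (k:ℕ) ≠ 0 := fun h => hk (Fin.ext h)
      simp [zero_pow this]
    · simp
  rw [hsum] at hco
  have hlast : (⟨m + 1 - 1, by omega⟩ : Fin (m+1)) = Fin.last m := by
    apply Fin.ext
    simp
  have hzero : (⟨0, by omega⟩ : Fin (m+1)) = 0 := rfl
  rw [hlast, hzero]
  linear_combination -hco
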